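/- For all integers p, q with 1 ≤ p < q, there exists a finite connected simple graph G such that dem(G) = p and meg(G) = q. -/

import Mathlib

open SimpleGraph

/-- A pair of vertices `u`, `v` monitors an edge `e` if `u` and `v` are reachable from
each other and `e` belongs to every shortest path (walk of length `G.dist u v`)
between `u` and `v`. -/
def Monitors {V : Type*} (G : SimpleGraph V) (u v : V) (e : Sym2 V) : Prop :=
  G.Reachable u v ∧ ∀ p : G.Walk u v, p.length = G.dist u v → e ∈ p.edges

/-- A monitoring edge-geodetic set of `G`: every edge of `G` is monitored by some
pair of vertices of `M`. -/
def IsMEGSet {V : Type*} (G : SimpleGraph V) (M : Set V) : Prop :=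
  ∀ e ∈ G.edgeSet, ∃ u ∈ M, ∃ v ∈ M, Monitors G u v e

/-- The monitoring edge-geodetic number of `G`: the minimum size of an MEG-set. -/
noncomputable def meg {V : Type*} [Fintype V] (G : SimpleGraph V) : ℕ :=
  sInf {n : ℕ | ∃ M : Finset V, IsMEGSet G ↑M ∧ M.card = n}

/-- A distance edge-monitoring set: for every edge `e` there are `x ∈ S` and a vertex `y`
such that `e` lies on every shortest path between `x` and `y`. -/
def IsDEMSet {V : Type*} (G : SimpleGraph V) (S : Set V) : Prop :=
  ∀ e ∈ G.edgeSet, ∃ x ∈ S, ∃ y : V, Monitors G x y e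

/-- The distance edge-monitoring number of `G`. -/
noncomputable def dem {V : Type*} [Fintype V] (G : SimpleGraph V) : ℕ :=
  sInf {n : ℕ | ∃ S : Finset V, IsDEMSet G ↑S ∧ S.card = n}

/- ### Auxiliary walk lemmas -/

lemma edges_of_len1 {V} {G : SimpleGraph V} {u v : V} (w : G.Walk u v) (h : w.length = 1) :
    w.edges = [s(u,v)] := by
  cases w with
  | nil => simp at h
  | cons h' t =>
    simp [SimpleGraph.Walk.length_cons] at h
    have := SimpleGraph.Walk.Nil.eq h
    subst this
    have : t = SimpleGraph.Walk.nil := SimpleGraph.Walk.nil_iff_eq_nil.mp h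
    subst this
    simp

lemma edges_of_len2 {V} {G : SimpleGraph V} {u v : V} (w : G.Walk u v) (h : w.length = 2) :
    ∃ x, G.Adj u x ∧ G.Adj x v ∧ w.edges = [s(u,x), s(x,v)] := by
  cases w with
  | nil => simp at h
  | cons h' t =>
    simp [SimpleGraph.Walk.length_cons] at h
    have he := edges_of_len1 t h
    refine ⟨_, h', ?_, ?_⟩
    · cases t with
      | nil => simp at h
      | cons h2 t2 =>
        simp [SimpleGraph.Walk.length_cons] at h
        have := SimpleGraph.Walk.Nil.eq h
        subst this; exact h2
    · simp [he]

/- ### The construction: a clique `{0,…,p}` with `q-p` pendant leaves attached to `0`. -/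

section Construction

variable {p q : ℕ}

def GG (p q : ℕ) : SimpleGraph (Fin (q+1)) where
  Adj i j := i ≠ j ∧ ((i:ℕ) = 0 ∨ (j:ℕ) = 0 ∨ ((i:ℕ) ≤ p ∧ (j:ℕ) ≤ p))
  symm := ⟨by intro i j ⟨h1, h2⟩; exact ⟨h1.symm, by tauto⟩⟩
  loopless := ⟨by intro i ⟨h, _⟩; exact h rfl⟩

lemma fin_ne_iff {i j : Fin (q+1)} : i ≠ j ↔ (i:ℕ) ≠ (j:ℕ) := by simp [Fin.ext_iff]

lemma GG_adj_hub {v : Fin (q+1)} (h : (v:ℕ) ≠ 0) : (GG p q).Adj 0 v :=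
  ⟨by rw [fin_ne_iff]; simpa using Ne.symm h, Or.inl rfl⟩

lemma GG_conn : (GG p q).Connected := by
  rw [connected_iff]
  refine ⟨fun u v => ?_, ⟨0⟩⟩
  by_cases hu : (u:ℕ) = 0
  · by_cases hv : (v:ℕ) = 0
    · have : u = v := by rw [Fin.ext_iff]; omega
      subst this; exact Reachable.refl u
    · have : u = 0 := by rw [Fin.ext_iff]; exact hu
      subst this; exact (GG_adj_hub hv).reachable
  · by_cases hv : (v:ℕ) = 0
    · have : v = 0 := by rw [Fin.ext_iff]; exact hv
      subst this; exact ((GG_adj_hub hu).symm).reachable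
    · exact ((GG_adj_hub hu).symm).reachable.trans (GG_adj_hub hv).reachable

lemma leaf_nbr {w l : Fin (q+1)} (h : (GG p q).Adj w l) (hl : p < (l:ℕ)) : (w:ℕ) = 0 := by
  obtain ⟨-, h2⟩ := h; omega

lemma GG_not_adj {u v : Fin (q+1)} (hu : (u:ℕ) ≠ 0) (hv : (v:ℕ) ≠ 0)
    (h : ¬((u:ℕ) ≤ p ∧ (v:ℕ) ≤ p)) : ¬ (GG p q).Adj u v := by
  rintro ⟨-, h2⟩; omega

lemma nz_of_not_adj {u v : Fin (q+1)} (huv : u ≠ v) (hna : ¬ (GG p q).Adj u v) :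
    (u:ℕ) ≠ 0 ∧ (v:ℕ) ≠ 0 := by
  constructor
  · intro h0
    have : u = 0 := by rw [Fin.ext_iff]; exact h0
    subst this
    exact hna (GG_adj_hub fun hv0 => huv (by rw [Fin.ext_iff]; simp [hv0]))
  · intro h0
    have : v = 0 := by rw [Fin.ext_iff]; exact h0
    subst this
    exact hna ((GG_adj_hub fun hu0 => huv (by rw [Fin.ext_iff]; simp [hu0])).symm)

noncomputable def hubWalk (u v : Fin (q+1)) (hu : (u:ℕ) ≠ 0) (hv : (v:ℕ) ≠ 0) :
    (GG p q).Walk u v :=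
  Walk.cons ((GG_adj_hub hu).symm) (Walk.cons (GG_adj_hub hv) Walk.nil)

lemma GG_dist_two {u v : Fin (q+1)} (huv : u ≠ v) (hna : ¬ (GG p q).Adj u v) :
    (GG p q).dist u v = 2 := by
  obtain ⟨hu, hv⟩ := nz_of_not_adj huv hna
  have hle : (GG p q).dist u v ≤ 2 := by
    have := SimpleGraph.dist_le (hubWalk (p:=p) u v hu hv)
    simpa [hubWalk] using this
  have h0 : (GG p q).dist u v ≠ 0 := fun h => huv (GG_conn.dist_eq_zero_iff.mp h)
  have h1 : (GG p q).dist u v ≠ 1 := fun h => hna (SimpleGraph.dist_eq_one_iff_adj.mp h)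
  omega

lemma mon_adj {u v : Fin (q+1)} (h : (GG p q).Adj u v) : Monitors (GG p q) u v s(u,v) :=
  ⟨h.reachable, fun w hw => by
    rw [SimpleGraph.dist_eq_one_iff_adj.mpr h] at hw
    rw [edges_of_len1 w hw]; simp⟩

lemma shortest_edges2 {u l : Fin (q+1)} (hu : (u:ℕ) ≠ 0) (hl : p < (l:ℕ)) (hul : u ≠ l)
    (w : (GG p q).Walk u l) (hw : w.length = (GG p q).dist u l) :
    w.edges = [s(u,(0:Fin (q+1))), s((0:Fin (q+1)), l)] := by
  have hl0 : (l:ℕ) ≠ 0 := by omega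
  have hna : ¬ (GG p q).Adj u l := GG_not_adj hu hl0 (by omega)
  rw [GG_dist_two hul hna] at hw
  obtain ⟨x, hux, hxl, he⟩ := edges_of_len2 w hw
  have hx0 : x = 0 := by rw [Fin.ext_iff]; simpa using leaf_nbr hxl hl
  subst hx0; exact he

lemma mon_leaf1 {u l : Fin (q+1)} (hu : (u:ℕ) ≠ 0) (hl : p < (l:ℕ)) (hul : u ≠ l) :
    Monitors (GG p q) u l s(u,(0:Fin (q+1))) :=
  ⟨GG_conn.preconnected u l, fun w hw => by rw [shortest_edges2 hu hl hul w hw]; simp⟩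

lemma mon_leaf2 {u l : Fin (q+1)} (hu : (u:ℕ) ≠ 0) (hl : p < (l:ℕ)) (hul : u ≠ l) :
    Monitors (GG p q) u l s((0:Fin (q+1)),l) :=
  ⟨GG_conn.preconnected u l, fun w hw => by rw [shortest_edges2 hu hl hul w hw]; simp⟩

lemma not_mon_nil {u : Fin (q+1)} {e : Sym2 (Fin (q+1))} : ¬ Monitors (GG p q) u u e := by
  rintro ⟨-, h⟩
  have := h Walk.nil (by simp [SimpleGraph.dist_self])
  simp at this

lemma not_mon_avoid {u w v : Fin (q+1)} (hv0 : (v:ℕ) ≠ 0) (hvu : v ≠ u) (hvw : v ≠ w)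
    {e : Sym2 (Fin (q+1))} (hve : v ∈ e) : ¬ Monitors (GG p q) u w e := by
  intro hm
  obtain ⟨z, rfl⟩ := Sym2.mem_iff_exists.mp hve
  by_cases huw : u = w
  · subst huw; exact not_mon_nil hm
  by_cases hadj : (GG p q).Adj u w
  · have := hm.2 (Walk.cons hadj Walk.nil)
      (by simp [SimpleGraph.dist_eq_one_iff_adj.mpr hadj])
    simp at this
    rcases this with ⟨h1, -⟩ | ⟨h1, -⟩
    · exact hvu h1
    · exact hvw h1
  · obtain ⟨hu, hw⟩ := nz_of_not_adj huw hadj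
    have := hm.2 (hubWalk (p:=p) u w hu hw)
      (by simp [hubWalk, GG_dist_two huw hadj])
    simp [hubWalk] at this
    rcases this with (⟨h1, -⟩ | ⟨h1, -⟩) | (⟨h1, -⟩ | ⟨h1, -⟩)
    · exact hvu h1
    · exact hv0 (by rw [h1]; rfl)
    · exact hv0 (by rw [h1]; rfl)
    · exact hvw h1

lemma not_mon_hub_edge {i x y : Fin (q+1)} (hi0 : (i:ℕ) ≠ 0) (hip : (i:ℕ) ≤ p)
    (hx0 : (x:ℕ) ≠ 0) (hxp : (x:ℕ) ≤ p) (hxi : x ≠ i) :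
    ¬ Monitors (GG p q) x y s((0 : Fin (q+1)), i) := by
  intro hm
  by_cases hiy : i = y
  · subst hiy
    have hadj : (GG p q).Adj x i := ⟨hxi, Or.inr (Or.inr ⟨hxp, hip⟩)⟩
    have := hm.2 (Walk.cons hadj Walk.nil)
      (by simp [SimpleGraph.dist_eq_one_iff_adj.mpr hadj])
    simp at this
    rcases this with h1 | ⟨-, h2⟩
    · exact hx0 (by rw [← h1]; rfl)
    · exact hxi h2.symm
  · exact not_mon_avoid hi0 (fun h => hxi h.symm) hiy (by simp) hm

end Construction

/-- for all `1 ≤ p < q` there is a finite connected graph `G` with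
`dem G = p` and `meg G = q`. -/
theorem exists_graph_with_prescribed_dem_meg (p q : ℕ) (hp : 1 ≤ p) (hpq : p < q) :
    ∃ (n : ℕ) (G : SimpleGraph (Fin n)), G.Connected ∧ dem G = p ∧ meg G = q := by
  refine ⟨q + 1, GG p q, GG_conn, ?_, ?_⟩
  -- some distinguished vertices
  · -- dem = p
    set C : Finset (Fin (q+1)) := Finset.Icc ⟨1, by omega⟩ ⟨p, by omega⟩ with hC
    have hmemC : ∀ v : Fin (q+1), v ∈ C ↔ 1 ≤ (v:ℕ) ∧ (v:ℕ) ≤ p := by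
      intro v; rw [hC, Finset.mem_Icc]; simp [Fin.le_def]
    have hCcard : C.card = p := by rw [hC, Fin.card_Icc]; simp
    have hDEM : IsDEMSet (GG p q) ↑C := by
      intro e he
      induction e using Sym2.ind with
      | _ a b =>
        obtain ⟨hab, hcase⟩ := ((GG p q).mem_edgeSet).mp he
        by_cases ha0 : (a:ℕ) = 0
        · have ha : a = 0 := by rw [Fin.ext_iff]; exact ha0
          subst ha
          have hb0 : (b:ℕ) ≠ 0 := fun h => hab (by rw [Fin.ext_iff]; simpa using h.symm)
          by_cases hbp : (b:ℕ) ≤ p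
          · refine ⟨b, ?_, ⟨p+1, by omega⟩, ?_⟩
            · rw [Finset.mem_coe, hmemC]; omega
            · have hm := mon_leaf1 (p:=p) (q:=q) (u:=b) (l:=⟨p+1, by omega⟩) hb0
                (by simp) (by rw [fin_ne_iff]; simp; omega)
              rwa [Sym2.eq_swap] at hm
          · refine ⟨⟨1, by omega⟩, ?_, b, ?_⟩
            · rw [Finset.mem_coe, hmemC]; simp; omega
            · exact mon_leaf2 (by simp) (by omega) (by rw [fin_ne_iff]; simp; omega)
        · by_cases hb0 : (b:ℕ) = 0
          · have hb : b = 0 := by rw [Fin.ext_iff]; exact hb0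
            subst hb
            by_cases hap : (a:ℕ) ≤ p
            · refine ⟨a, ?_, ⟨p+1, by omega⟩, ?_⟩
              · rw [Finset.mem_coe, hmemC]; omega
              · exact mon_leaf1 ha0 (by simp) (by rw [fin_ne_iff]; simp; omega)
            · refine ⟨⟨1, by omega⟩, ?_, a, ?_⟩
              · rw [Finset.mem_coe, hmemC]; simp; omega
              · have hm := mon_leaf2 (p:=p) (q:=q) (u:=⟨1, by omega⟩) (l:=a)
                  (by simp) (by omega) (by rw [fin_ne_iff]; simp; omega)
                rwa [Sym2.eq_swap] at hm
          · have hbothp : (a:ℕ) ≤ p ∧ (b:ℕ) ≤ p := by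
              rcases hcase with h | h | h
              · omega
              · omega
              · exact h
            refine ⟨a, ?_, b, mon_adj ⟨hab, hcase⟩⟩
            rw [Finset.mem_coe, hmemC]; omega
    have hpmem : p ∈ {n : ℕ | ∃ S : Finset (Fin (q+1)), IsDEMSet (GG p q) ↑S ∧ S.card = n} :=
      ⟨C, hDEM, hCcard⟩
    refine le_antisymm (Nat.sInf_le hpmem) (le_csInf ⟨p, hpmem⟩ ?_)
    rintro n ⟨S', hS', rfl⟩
    -- lower bound: p ≤ S'.card
    have step1 : ∀ i ∈ C, ∀ j ∈ C, i ≠ j → i ∈ S' ∨ j ∈ S' := by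
      intro i hi j hj hij
      obtain ⟨hi1, hi2⟩ := (hmemC i).mp hi
      obtain ⟨hj1, hj2⟩ := (hmemC j).mp hj
      have hadj : (GG p q).Adj i j := ⟨hij, Or.inr (Or.inr ⟨hi2, hj2⟩)⟩
      obtain ⟨x, hxS, y, hm⟩ := hS' s(i,j) (((GG p q).mem_edgeSet).mpr hadj)
      have h1 : i = x ∨ i = y := by
        by_contra hc; push_neg at hc
        exact not_mon_avoid (by omega) hc.1 hc.2 (Sym2.mem_mk_left i j) hm
      have h2 : j = x ∨ j = y := by
        by_contra hc; push_neg at hc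
        exact not_mon_avoid (by omega) hc.1 hc.2 (Sym2.mem_mk_right i j) hm
      rcases h1 with h1 | h1
      · exact Or.inl (h1 ▸ Finset.mem_coe.mp hxS)
      · rcases h2 with h2 | h2
        · exact Or.inr (h2 ▸ Finset.mem_coe.mp hxS)
        · exact absurd (h1.trans h2.symm) hij
    have step2 : (C \ S').card ≤ 1 := by
      rw [Finset.card_le_one]
      intro a ha b hb
      by_contra hne
      obtain ⟨haC, haS⟩ := Finset.mem_sdiff.mp ha
      obtain ⟨hbC, hbS⟩ := Finset.mem_sdiff.mp hb
      rcases step1 a haC b hbC hne with h | h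
      · exact haS h
      · exact hbS h
    have hsplit := Finset.card_inter_add_card_sdiff C S'
    by_cases hempty : C \ S' = ∅
    · have hsub : C ⊆ S' := Finset.sdiff_eq_empty_iff_subset.mp hempty
      calc p = C.card := hCcard.symm
        _ ≤ S'.card := Finset.card_le_card hsub
    · obtain ⟨k, hk⟩ := Finset.nonempty_iff_ne_empty.mpr hempty
      obtain ⟨hkC, hkS⟩ := Finset.mem_sdiff.mp hk
      obtain ⟨hk1, hk2⟩ := (hmemC k).mp hkC
      obtain ⟨x, hxS, y, hm⟩ := hS' s(0, k)
        (((GG p q).mem_edgeSet).mpr (GG_adj_hub (by omega)))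
      have hxC : x ∉ C := by
        intro hxC'
        obtain ⟨hx1, hx2⟩ := (hmemC x).mp hxC'
        have hxk : x ≠ k := fun h => hkS (h ▸ Finset.mem_coe.mp hxS)
        exact not_mon_hub_edge (by omega) hk2 (by omega) hx2 hxk hm
      have hsub : insert x (C ∩ S') ⊆ S' := by
        intro z hz
        rcases Finset.mem_insert.mp hz with h | h
        · exact h ▸ Finset.mem_coe.mp hxS
        · exact (Finset.mem_inter.mp h).2
      have hins : (insert x (C ∩ S')).card = (C ∩ S').card + 1 :=
        Finset.card_insert_of_notMem (fun h => hxC (Finset.mem_inter.mp h).1)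
      have := Finset.card_le_card hsub
      omega
  · -- meg = q
    set M : Finset (Fin (q+1)) := Finset.univ.erase 0 with hM
    have hmemM : ∀ v : Fin (q+1), v ∈ M ↔ (v:ℕ) ≠ 0 := by
      intro v
      rw [hM, Finset.mem_erase]
      constructor
      · rintro ⟨h, -⟩ h0
        exact h (by rw [Fin.ext_iff]; exact h0)
      · intro h
        exact ⟨fun h0 => h (by rw [h0]; rfl), Finset.mem_univ v⟩
    have hMcard : M.card = q := by
      rw [hM, Finset.card_erase_of_mem (Finset.mem_univ _), Finset.card_univ, Fintype.card_fin]; omega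
    have hMEG : IsMEGSet (GG p q) ↑M := by
      intro e he
      induction e using Sym2.ind with
      | _ a b =>
        obtain ⟨hab, hcase⟩ := ((GG p q).mem_edgeSet).mp he
        by_cases ha0 : (a:ℕ) = 0
        · have ha : a = 0 := by rw [Fin.ext_iff]; exact ha0
          subst ha
          have hb0 : (b:ℕ) ≠ 0 := fun h => hab (by rw [Fin.ext_iff]; simpa using h.symm)
          by_cases hbp : (b:ℕ) ≤ p
          · refine ⟨b, by rw [Finset.mem_coe, hmemM]; exact hb0, ⟨p+1, by omega⟩,
              by rw [Finset.mem_coe, hmemM]; simp, ?_⟩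
            have hm := mon_leaf1 (p:=p) (q:=q) (u:=b) (l:=⟨p+1, by omega⟩) hb0
              (by simp) (by rw [fin_ne_iff]; simp; omega)
            rwa [Sym2.eq_swap] at hm
          · refine ⟨⟨1, by omega⟩, by rw [Finset.mem_coe, hmemM]; simp, b,
              by rw [Finset.mem_coe, hmemM]; exact hb0, ?_⟩
            exact mon_leaf2 (by simp) (by omega) (by rw [fin_ne_iff]; simp; omega)
        · by_cases hb0 : (b:ℕ) = 0
          · have hb : b = 0 := by rw [Fin.ext_iff]; exact hb0
            subst hb
            by_cases hap : (a:ℕ) ≤ p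
            · refine ⟨a, by rw [Finset.mem_coe, hmemM]; exact ha0, ⟨p+1, by omega⟩,
                by rw [Finset.mem_coe, hmemM]; simp, ?_⟩
              exact mon_leaf1 ha0 (by simp) (by rw [fin_ne_iff]; simp; omega)
            · refine ⟨⟨1, by omega⟩, by rw [Finset.mem_coe, hmemM]; simp, a,
                by rw [Finset.mem_coe, hmemM]; exact ha0, ?_⟩
              have hm := mon_leaf2 (p:=p) (q:=q) (u:=⟨1, by omega⟩) (l:=a)
                (by simp) (by omega) (by rw [fin_ne_iff]; simp; omega)
              rwa [Sym2.eq_swap] at hm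
          · exact ⟨a, by rw [Finset.mem_coe, hmemM]; exact ha0, b,
              by rw [Finset.mem_coe, hmemM]; exact hb0, mon_adj ⟨hab, hcase⟩⟩
    have hqmem : q ∈ {n : ℕ | ∃ M : Finset (Fin (q+1)), IsMEGSet (GG p q) ↑M ∧ M.card = n} :=
      ⟨M, hMEG, hMcard⟩
    refine le_antisymm (Nat.sInf_le hqmem) (le_csInf ⟨q, hqmem⟩ ?_)
    rintro n ⟨M', hM', rfl⟩
    have hsub : M ⊆ M' := by
      intro v hv
      have hv0 : (v:ℕ) ≠ 0 := (hmemM v).mp hv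
      obtain ⟨u, hu, w, hw, hm⟩ := hM' s(0, v)
        (((GG p q).mem_edgeSet).mpr (GG_adj_hub hv0))
      have hvuw : v = u ∨ v = w := by
        by_contra hc; push_neg at hc
        exact not_mon_avoid hv0 hc.1 hc.2 (Sym2.mem_mk_right 0 v) hm
      rcases hvuw with h | h
      · exact h ▸ Finset.mem_coe.mp hu
      · exact h ▸ Finset.mem_coe.mp hw
    calc q = M.card := hMcard.symm
      _ ≤ M'.card := Finset.card_le_card hsub
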